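/- Let (G_t)_{t=0}^m be a filtration on a probability space and let (H_t, α̃_t, φ_t)_{t=0}^m be a conditionally valid testing sequence with respect to (G_t)_{t=0}^m, where α̃_t = α_t + δ_t with α_t ∈ [0,1] and δ_t both G_t-measurable, and suppose the target levels satisfy 1 − ∏_{t=0}^m (1 − α_t) ≤ α almost surely. Define τ := min{t : φ_t = 1}, with τ = ∞ if no φ_t equals 1, and H_∞ := 1. Then there exists a random variable ε_0 which is a linear combination of (δ_t)_{t=0}^m with random coefficients lying in [0,1] (so in particular |ε_0| ≤ Σ_{t=0}^m |δ_t| almost surely) such that P(H_τ = 0) ≤ α + E[ε_0]; consequently P(H_τ = 0) ≤ α + E[Σ_{t=0}^m |δ_t|]. If moreover the testing sequence is conditionally exact, 1 − ∏_{t=0}^m (1 − α_t) = α almost surely, and H_t = 0 almost surely for all t, then P(H_τ = 0) = α + E[ε_0]. -/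

import Mathlib

open MeasureTheory ProbabilityTheory Filter

namespace ApproxSEC

variable {Ω : Type*}

noncomputable def D (R : ℕ → Set Ω) (t : ℕ) : Set Ω := ⋂ s ∈ Finset.range t, (R s)ᶜ

noncomputable def Q (a : ℕ → Ω → ℝ) (t : ℕ) (ω : Ω) : ℝ := ∏ s ∈ Finset.range t, (1 - a s ω)

noncomputable def u (α : ℝ) (a : ℕ → Ω → ℝ) (t : ℕ) (ω : Ω) : ℝ :=
  max 0 (min 1 ((1 - α) / Q a t ω))

noncomputable def w (α : ℝ) (a : ℕ → Ω → ℝ) (t : ℕ) (ω : Ω) : ℝ :=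
  if 0 < Q a t ω then max 0 (min 1 ((1 - α) / Q a t ω)) else 1

noncomputable def F (G : ℕ → MeasurableSpace Ω) (R : ℕ → Set Ω) (t : ℕ) : MeasurableSpace Ω :=
  G t ⊔ ⨆ s ∈ Finset.range t, MeasurableSpace.generateFrom {R s}

set_option linter.unusedSectionVars false

section pointwise

variable {m : ℕ} {a : ℕ → Ω → ℝ} {α : ℝ} {ω : Ω}

lemma Q_zero (a : ℕ → Ω → ℝ) (ω : Ω) : Q a 0 ω = 1 := by simp [Q]

lemma Q_succ (a : ℕ → Ω → ℝ) (t : ℕ) (ω : Ω) :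
    Q a (t + 1) ω = Q a t ω * (1 - a t ω) := by
  simp [Q, Finset.prod_range_succ]

lemma Q_nonneg (ha : ∀ s ≤ m, a s ω ∈ Set.Icc (0:ℝ) 1) {t : ℕ} (ht : t ≤ m + 1) :
    0 ≤ Q a t ω :=
  Finset.prod_nonneg fun s hs => by
    have := ha s (by have := Finset.mem_range.1 hs; omega); have := this.2; linarith

lemma Q_le_one (ha : ∀ s ≤ m, a s ω ∈ Set.Icc (0:ℝ) 1) {t : ℕ} (ht : t ≤ m + 1) :
    Q a t ω ≤ 1 :=
  Finset.prod_le_one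
    (fun s hs => by
      have := (ha s (by have := Finset.mem_range.1 hs; omega)).2; linarith)
    (fun s hs => by
      have := (ha s (by have := Finset.mem_range.1 hs; omega)).1; linarith)

lemma Q_anti (ha : ∀ s ≤ m, a s ω ∈ Set.Icc (0:ℝ) 1) {t : ℕ} (ht : t ≤ m + 1) :
    Q a (m + 1) ω ≤ Q a t ω := by
  have h := Finset.prod_range_mul_prod_Ico (fun s => 1 - a s ω) ht
  have h1 : ∏ s ∈ Finset.Ico t (m+1), (1 - a s ω) ≤ 1 :=
    Finset.prod_le_one
      (fun s hs => by
        have := (ha s (by have := (Finset.mem_Ico.1 hs).2; omega)).2; linarith)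
      (fun s hs => by
        have := (ha s (by have := (Finset.mem_Ico.1 hs).2; omega)).1; linarith)
  have h2 : 0 ≤ Q a t ω := Q_nonneg ha ht
  calc Q a (m+1) ω = Q a t ω * ∏ s ∈ Finset.Ico t (m+1), (1 - a s ω) := h.symm
    _ ≤ Q a t ω * 1 := by
        apply mul_le_mul_of_nonneg_left h1 h2
    _ = Q a t ω := mul_one _

lemma u_mem (α : ℝ) (a : ℕ → Ω → ℝ) (t : ℕ) (ω : Ω) :
    u α a t ω ∈ Set.Icc (0:ℝ) 1 :=
  ⟨le_max_left _ _, max_le zero_le_one (min_le_left _ _)⟩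

/-- key multiplicative relation for `u`. -/
lemma u_rel (ha : ∀ s ≤ m, a s ω ∈ Set.Icc (0:ℝ) 1)
    (hb : 1 - α ≤ Q a (m+1) ω) {t : ℕ} (ht : t ≤ m) :
    u α a t ω = (1 - a t ω) * u α a (t + 1) ω := by
  set β := 1 - α with hβ
  by_cases hβ0 : β ≤ 0
  · have h0 : ∀ s, s ≤ m + 1 → u α a s ω = 0 := by
      intro s hs
      have hQ : 0 ≤ Q a s ω := Q_nonneg ha hs
      have : β / Q a s ω ≤ 0 := div_nonpos_of_nonpos_of_nonneg hβ0 hQ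
      have : min 1 (β / Q a s ω) ≤ 0 := le_trans (min_le_right _ _) this
      simp only [u, ← hβ]
      exact max_eq_left this
    rw [h0 t (by omega), h0 (t+1) (by omega)]; ring
  · push_neg at hβ0
    have hQt1 : 0 < Q a (t+1) ω := lt_of_lt_of_le hβ0 (le_trans hb (Q_anti ha (by omega)))
    have hQt : 0 < Q a t ω := by
      have h := Q_succ a t ω
      have h1 : 1 - a t ω ≤ 1 := by have := (ha t ht).1; linarith
      nlinarith [Q_nonneg ha (show t ≤ m + 1 by omega)]
    have hdiv1 : β / Q a t ω ≤ 1 := by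
      rw [div_le_one hQt]; exact le_trans hb (Q_anti ha (by omega))
    have hdiv2 : β / Q a (t+1) ω ≤ 1 := by
      rw [div_le_one hQt1]; exact le_trans hb (Q_anti ha (by omega))
    have hu1 : u α a t ω = β / Q a t ω := by
      simp only [u, ← hβ]
      rw [min_eq_right hdiv1, max_eq_right (le_of_lt (div_pos hβ0 hQt))]
    have hu2 : u α a (t+1) ω = β / Q a (t+1) ω := by
      simp only [u, ← hβ]
      rw [min_eq_right hdiv2, max_eq_right (le_of_lt (div_pos hβ0 hQt1))]
    rw [hu1, hu2, Q_succ a t ω]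
    have hat : 1 - a t ω ≠ 0 := by
      intro h; rw [Q_succ a t ω, h, mul_zero] at hQt1; exact lt_irrefl _ hQt1
    field_simp

lemma u_zero_bound (hα : 0 ≤ α) (a : ℕ → Ω → ℝ) (ω : Ω) :
    1 - u α a 0 ω ≤ α := by
  have h : Q a 0 ω = 1 := Q_zero a ω
  simp only [u, h, div_one]
  by_cases h1 : (1:ℝ) - α ≤ 0
  · rw [max_eq_left (le_trans (min_le_right _ _) h1)]; linarith
  · push_neg at h1
    rw [min_eq_right (by linarith), max_eq_right (by linarith)]
    linarith

end pointwise


section wpt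
variable {m : ℕ} {a δ : ℕ → Ω → ℝ} {α : ℝ} {ω : Ω}

lemma w_mem (α : ℝ) (a : ℕ → Ω → ℝ) (t : ℕ) (ω : Ω) : w α a t ω ∈ Set.Icc (0:ℝ) 1 := by
  unfold w
  by_cases h : 0 < Q a t ω
  · rw [if_pos h]
    exact ⟨le_max_left _ _, max_le zero_le_one (min_le_left _ _)⟩
  · rw [if_neg h]; exact ⟨zero_le_one, le_refl 1⟩

lemma w_top (heq : Q a (m+1) ω = 1 - α) : w α a (m+1) ω = 1 := by
  unfold w
  by_cases h : 0 < Q a (m+1) ω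
  · rw [if_pos h, ← heq, div_self (ne_of_gt h)]
    norm_num
  · rw [if_neg h]

lemma w_zero (ha : ∀ s ≤ m, a s ω ∈ Set.Icc (0:ℝ) 1)
    (heq : Q a (m+1) ω = 1 - α) : w α a 0 ω = 1 - α := by
  have h0 : Q a 0 ω = 1 := by simp [Q]
  have hβ0 : 0 ≤ 1 - α := heq ▸ Q_nonneg ha (le_refl (m+1))
  have hβ1 : 1 - α ≤ 1 := heq ▸ Q_le_one ha (le_refl (m+1))
  unfold w
  rw [if_pos (by rw [h0]; norm_num), h0, div_one, min_eq_right hβ1, max_eq_right hβ0]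

lemma w_step {t : ℕ} (ht : t ≤ m) (ha : ∀ s ≤ m, a s ω ∈ Set.Icc (0:ℝ) 1)
    (hat : a t ω + δ t ω ∈ Set.Icc (0:ℝ) 1)
    (heq : Q a (m+1) ω = 1 - α) :
    (1 - (a t ω + δ t ω)) * w α a (t+1) ω ≤ w α a t ω + max 0 (-(δ t ω)) := by
  have hβ0 : 0 ≤ 1 - α := heq ▸ Q_nonneg ha (le_refl (m+1))
  have hβQ1 : 1 - α ≤ Q a (t+1) ω := heq ▸ Q_anti ha (by omega)
  have hβQ0 : 1 - α ≤ Q a t ω := heq ▸ Q_anti ha (by omega)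
  have hQ1nn : 0 ≤ Q a (t+1) ω := Q_nonneg ha (by omega)
  have hQ0nn : 0 ≤ Q a t ω := Q_nonneg ha (by omega)
  have hsucc := Q_succ a t ω
  have ha1 := ha t ht
  by_cases h1 : 0 < Q a (t+1) ω
  · have h2 : 0 < Q a t ω := by nlinarith [ha1.1, ha1.2]
    have hwt : w α a t ω = (1 - α) / Q a t ω := by
      unfold w
      rw [if_pos h2, min_eq_right ((div_le_one h2).2 hβQ0),
        max_eq_right (div_nonneg hβ0 hQ0nn)]
    have hwt1 : w α a (t+1) ω = (1 - α) / Q a (t+1) ω := by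
      unfold w
      rw [if_pos h1, min_eq_right ((div_le_one h1).2 hβQ1),
        max_eq_right (div_nonneg hβ0 hQ1nn)]
    rw [hwt, hwt1]
    have hkey : (1 - a t ω) * ((1 - α) / Q a (t+1) ω) = (1 - α) / Q a t ω := by
      rw [hsucc]
      have h1a : 1 - a t ω ≠ 0 := by
        intro h; rw [hsucc, h, mul_zero] at h1; exact lt_irrefl _ h1
      field_simp
    have hρ0 : 0 ≤ (1 - α) / Q a (t+1) ω := div_nonneg hβ0 hQ1nn
    have hρ1 : (1 - α) / Q a (t+1) ω ≤ 1 := (div_le_one h1).2 hβQ1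
    have hmax : -(δ t ω) * ((1 - α) / Q a (t+1) ω) ≤ max 0 (-(δ t ω)) := by
      rcases le_or_gt 0 (δ t ω) with h | h
      · calc -(δ t ω) * ((1 - α) / Q a (t+1) ω) ≤ 0 := by
              apply mul_nonpos_of_nonpos_of_nonneg (by linarith) hρ0
          _ ≤ max 0 (-(δ t ω)) := le_max_left _ _
      · calc -(δ t ω) * ((1 - α) / Q a (t+1) ω) ≤ -(δ t ω) * 1 := by
              apply mul_le_mul_of_nonneg_left hρ1 (by linarith)
          _ = -(δ t ω) := mul_one _
          _ ≤ max 0 (-(δ t ω)) := le_max_right _ _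
    nlinarith [hkey, hmax]
  · have hQ1z : Q a (t+1) ω = 0 := le_antisymm (not_lt.1 h1) hQ1nn
    have hβz : 1 - α = 0 := le_antisymm (hQ1z ▸ hβQ1) hβ0
    have hwt1 : w α a (t+1) ω = 1 := by unfold w; rw [if_neg h1]
    rw [hwt1, mul_one]
    by_cases h2 : 0 < Q a t ω
    · have h1a : 1 - a t ω = 0 := by
        rcases mul_eq_zero.1 (hsucc ▸ hQ1z) with h | h
        · exact absurd h (ne_of_gt h2)
        · exact h
      have hwt : w α a t ω = 0 := by
        unfold w
        rw [if_pos h2, hβz, zero_div]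
        simp
      rw [hwt, zero_add]
      have : 1 - (a t ω + δ t ω) = -(δ t ω) := by linarith [h1a]
      rw [this]
      exact le_max_right _ _
    · have hwt : w α a t ω = 1 := by unfold w; rw [if_neg h2]
      rw [hwt]
      have := hat.1
      have hmx : 0 ≤ max 0 (-(δ t ω)) := le_max_left _ _
      linarith

end wpt

lemma D_zero (R : ℕ → Set Ω) : D R 0 = Set.univ := by simp [D]

lemma D_succ (R : ℕ → Set Ω) (t : ℕ) : D R (t + 1) = D R t ∩ (R t)ᶜ := by
  simp [D, Finset.range_add_one, Set.biInter_insert, Set.inter_comm]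

lemma D_subset {R : ℕ → Set Ω} {s t : ℕ} (h : s < t) : D R t ⊆ (R s)ᶜ :=
  Set.biInter_subset_of_mem (Finset.mem_range.2 h)

lemma ind_inter (S T : Set Ω) (ω : Ω) :
    (S ∩ T).indicator (fun _ => (1:ℝ)) ω
      = S.indicator (fun _ => (1:ℝ)) ω * T.indicator (fun _ => (1:ℝ)) ω := by
  by_cases hS : ω ∈ S <;> by_cases hT : ω ∈ T <;>
    simp [Set.indicator_of_mem, Set.indicator_of_notMem, hS, hT, Set.mem_inter_iff]

lemma int_bdd [m0 : MeasurableSpace Ω] {μ : Measure Ω} [IsProbabilityMeasure μ]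
    {f : Ω → ℝ} (hf : AEStronglyMeasurable f μ) (C : ℝ) (h : ∀ ω, |f ω| ≤ C) :
    Integrable f μ :=
  (integrable_const C).mono' hf (ae_of_all _ (by simpa [Real.norm_eq_abs] using h))


section meas

variable [m0 : MeasurableSpace Ω] {G : ℕ → MeasurableSpace Ω} {R : ℕ → Set Ω}
  {a : ℕ → Ω → ℝ} {m : ℕ} {α : ℝ}

lemma F_le (hG_le : ∀ t, G t ≤ m0) (hR_meas : ∀ t ≤ m, MeasurableSet (R t))
    {t : ℕ} (ht : t ≤ m) : F G R t ≤ m0 := by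
  refine sup_le (hG_le t) (iSup₂_le fun s hs => ?_)
  refine MeasurableSpace.generateFrom_le ?_
  rintro x rfl
  exact hR_meas s (by have := Finset.mem_range.1 hs; omega)

lemma D_measF {t : ℕ} : MeasurableSet[F G R t] (D R t) := by
  refine Finset.measurableSet_biInter _ fun s hs => ?_
  have h1 : MeasurableSet[MeasurableSpace.generateFrom {R s}] (R s) :=
    MeasurableSpace.measurableSet_generateFrom rfl
  have h2 : MeasurableSpace.generateFrom {R s} ≤ F G R t := by
    refine le_trans ?_ le_sup_right
    exact le_biSup (fun s => MeasurableSpace.generateFrom {R s}) hs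
  exact (h2 _ h1).compl

lemma D_meas (hR_meas : ∀ t ≤ m, MeasurableSet (R t)) {t : ℕ} (ht : t ≤ m + 1) :
    MeasurableSet (D R t) :=
  Finset.measurableSet_biInter _ fun s hs =>
    (hR_meas s (by have := Finset.mem_range.1 hs; omega)).compl

lemma Q_meas_GT (hG_mono : ∀ s t : ℕ, s ≤ t → G s ≤ G t)
    (ha_meas : ∀ t ≤ m, Measurable[G t] (a t)) {t : ℕ} (ht : t ≤ m) :
    Measurable[G t] (Q a (t + 1)) := by
  apply Finset.measurable_prod
  intro s hs
  have hs' : s ≤ t := by have := Finset.mem_range.1 hs; omega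
  exact measurable_const.sub
    (((ha_meas s (le_trans hs' ht)).mono (hG_mono s t hs') le_rfl))

lemma u_meas_GT (hG_mono : ∀ s t : ℕ, s ≤ t → G s ≤ G t)
    (ha_meas : ∀ t ≤ m, Measurable[G t] (a t)) {t : ℕ} (ht : t ≤ m) :
    Measurable[G t] (u α a (t + 1)) := by
  unfold u
  exact measurable_const.max (measurable_const.min (measurable_const.div (Q_meas_GT hG_mono ha_meas ht)))

end meas


section meas2
variable [m0 : MeasurableSpace Ω]

lemma w_meas_GT {G : ℕ → MeasurableSpace Ω} {a : ℕ → Ω → ℝ} {m : ℕ} {α : ℝ}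
    (hG_mono : ∀ s t : ℕ, s ≤ t → G s ≤ G t)
    (ha_meas : ∀ t ≤ m, Measurable[G t] (a t)) {t : ℕ} (ht : t ≤ m) :
    Measurable[G t] (w α a (t + 1)) := by
  unfold w
  have hQ : Measurable[G t] (Q a (t+1)) := Q_meas_GT hG_mono ha_meas ht
  exact Measurable.ite (measurableSet_lt measurable_const hQ)
    (measurable_const.max (measurable_const.min (measurable_const.div hQ)))
    measurable_const

lemma Q_meas {G : ℕ → MeasurableSpace Ω} {a : ℕ → Ω → ℝ} {m : ℕ}
    (hG_le : ∀ t, G t ≤ m0)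
    (ha_meas : ∀ t ≤ m, Measurable[G t] (a t)) {t : ℕ} (ht : t ≤ m + 1) :
    Measurable (Q a t) := by
  apply Finset.measurable_prod
  intro s hs
  have hs' : s ≤ m := by have := Finset.mem_range.1 hs; omega
  exact measurable_const.sub ((ha_meas s hs').mono (hG_le s) le_rfl)

lemma w_meas {G : ℕ → MeasurableSpace Ω} {a : ℕ → Ω → ℝ} {m : ℕ} {α : ℝ}
    (hG_le : ∀ t, G t ≤ m0)
    (ha_meas : ∀ t ≤ m, Measurable[G t] (a t)) {t : ℕ} (ht : t ≤ m + 1) :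
    Measurable (w α a t) := by
  unfold w
  have hQ : Measurable (Q a t) := Q_meas hG_le ha_meas ht
  exact Measurable.ite (measurableSet_lt measurable_const hQ)
    (measurable_const.max (measurable_const.min (measurable_const.div hQ)))
    measurable_const


lemma u_meas [m0 : MeasurableSpace Ω] {G : ℕ → MeasurableSpace Ω}
    {a : ℕ → Ω → ℝ} {m : ℕ} {α : ℝ}
    (hG_le : ∀ t, G t ≤ m0)
    (ha_meas : ∀ t ≤ m, Measurable[G t] (a t)) {t : ℕ} (ht : t ≤ m + 1) :
    Measurable (u α a t) := by
  unfold u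
  exact measurable_const.max
    (measurable_const.min (measurable_const.div (Q_meas hG_le ha_meas ht)))


end meas2

lemma union_toReal_eq_sum [m0 : MeasurableSpace Ω] (μ : Measure Ω) [IsProbabilityMeasure μ]
    {m : ℕ} {N R : ℕ → Set Ω}
    (hR_meas : ∀ t ≤ m, MeasurableSet (R t))
    (hN_meas : ∀ t ≤ m, MeasurableSet (N t)) :
    (μ (⋃ t ∈ Finset.range (m+1), ((R t ∩ D R t) ∩ N t))).toReal
      = ∑ t ∈ Finset.range (m+1), (μ ((R t ∩ D R t) ∩ N t)).toReal := by
  have hdisj : (↑(Finset.range (m+1)) : Set ℕ).PairwiseDisjoint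
      (fun t => (R t ∩ D R t) ∩ N t) := by
    intro x hx y hy hxy
    have hgen : ∀ {x y : ℕ}, x < y →
        Disjoint ((R x ∩ D R x) ∩ N x) ((R y ∩ D R y) ∩ N y) := by
      intro x y hlt
      rw [Set.disjoint_left]
      rintro ω ⟨⟨hRx, _⟩, _⟩ ⟨⟨_, hDy⟩, _⟩
      exact D_subset hlt hDy hRx
    rcases lt_or_gt_of_ne hxy with h | h
    · exact hgen h
    · exact (hgen h).symm
  have hmeas : ∀ t ∈ Finset.range (m+1), MeasurableSet ((R t ∩ D R t) ∩ N t) := by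
    intro t ht
    have ht' : t ≤ m := by have := Finset.mem_range.1 ht; omega
    exact ((hR_meas t ht').inter (D_meas hR_meas (by omega))).inter (hN_meas t ht')
  rw [measure_biUnion_finset hdisj hmeas,
    ENNReal.toReal_sum (fun t _ => measure_ne_top μ _)]

lemma mem_D {R : ℕ → Set Ω} {t : ℕ} {ω : Ω} : ω ∈ D R t ↔ ∀ s < t, ω ∉ R s := by
  simp [D]

lemma union_compl {R : ℕ → Set Ω} (m : ℕ) :
    ⋃ t ∈ Finset.range (m+1), (R t ∩ D R t) = (D R (m+1))ᶜ := by
  classical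
  ext ω
  simp only [Set.mem_iUnion, Finset.mem_range, Set.mem_compl_iff, exists_prop]
  constructor
  · rintro ⟨t, ht, hRt, _⟩ hmem
    exact D_subset ht hmem hRt
  · intro hc
    rw [mem_D] at hc
    push_neg at hc
    obtain ⟨s, hs, hRs⟩ := hc
    have hex : ∃ n, ω ∈ R n := ⟨s, hRs⟩
    refine ⟨Nat.find hex, lt_of_le_of_lt (Nat.find_min' hex hRs) hs,
      Nat.find_spec hex, ?_⟩
    rw [mem_D]
    intro r hr
    exact Nat.find_min hex hr


lemma P_eq [m0 : MeasurableSpace Ω] (μ : Measure Ω) [IsProbabilityMeasure μ]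
    {m : ℕ} {N R : ℕ → Set Ω}
    (hR_meas : ∀ t ≤ m, MeasurableSet (R t))
    (hnull : ∀ t ≤ m, ∀ᵐ ω ∂μ, ω ∈ N t) :
    (μ (⋃ t ∈ Finset.range (m+1), ((R t ∩ D R t) ∩ N t))).toReal
      = 1 - (μ (D R (m+1))).toReal := by
  have hae : ∀ᵐ ω ∂μ, ∀ t ∈ Set.Iic m, ω ∈ N t :=
    (ae_ball_iff (Set.to_countable _)).2 fun t ht => hnull t ht
  have hsets : (⋃ t ∈ Finset.range (m+1), ((R t ∩ D R t) ∩ N t) : Set Ω)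
      =ᵐ[μ] (⋃ t ∈ Finset.range (m+1), (R t ∩ D R t) : Set Ω) := by
    rw [Filter.eventuallyEq_set]
    filter_upwards [hae] with ω hω
    simp only [Set.mem_iUnion, Finset.mem_range, exists_prop, Set.mem_inter_iff]
    constructor
    · rintro ⟨t, ht, ⟨h1, h2⟩, _⟩; exact ⟨t, ht, h1, h2⟩
    · rintro ⟨t, ht, h1, h2⟩
      exact ⟨t, ht, ⟨h1, h2⟩, hω t (Set.mem_Iic.2 (by omega))⟩
  have hDm : MeasurableSet (D R (m+1)) := D_meas hR_meas le_rfl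
  rw [measure_congr hsets, union_compl, measure_compl hDm (measure_ne_top μ _),
    measure_univ, ENNReal.toReal_sub_of_le prob_le_one (by norm_num)]
  simp


lemma abs_mul2_le {x y : ℝ} (hx : 0 ≤ x) (hx1 : x ≤ 1) (hy : 0 ≤ y) (hy1 : y ≤ 1) :
    |x * y| ≤ 1 := by
  rw [abs_of_nonneg (mul_nonneg hx hy)]
  calc x * y ≤ 1 * 1 := mul_le_mul hx1 hy1 hy (by norm_num)
    _ = 1 := by norm_num

lemma abs_mul3_le {x y z : ℝ} (hx : 0 ≤ x) (hx1 : x ≤ 1) (hy : 0 ≤ y) (hy1 : y ≤ 1)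
    (hz : 0 ≤ z) (hz1 : z ≤ 1) : |x * y * z| ≤ 1 := by
  rw [abs_of_nonneg (mul_nonneg (mul_nonneg hx hy) hz)]
  calc x * y * z ≤ 1 * 1 * 1 :=
        mul_le_mul (mul_le_mul hx1 hy1 hy (by norm_num)) hz1 hz (by norm_num)
    _ = 1 := by norm_num

set_option maxHeartbeats 1000000 in
lemma upper [m0 : MeasurableSpace Ω] (μ : Measure Ω) [IsProbabilityMeasure μ]
    (m : ℕ) (G : ℕ → MeasurableSpace Ω)
    (hG_mono : ∀ s t : ℕ, s ≤ t → G s ≤ G t) (hG_le : ∀ t, G t ≤ m0)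
    (N R : ℕ → Set Ω) (a δ : ℕ → Ω → ℝ) (α : ℝ)
    (hN_meas : ∀ t ≤ m, MeasurableSet[G t] (N t))
    (hR_meas : ∀ t ≤ m, MeasurableSet (R t))
    (ha_meas : ∀ t ≤ m, Measurable[G t] (a t))
    (hδ_meas : ∀ t ≤ m, Measurable[G t] (δ t))
    (ha_mem : ∀ t ≤ m, ∀ ω, a t ω ∈ Set.Icc (0 : ℝ) 1)
    (ha_tilde_mem : ∀ t ≤ m, ∀ ω, a t ω + δ t ω ∈ Set.Icc (0 : ℝ) 1)
    (hα : 0 ≤ α)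
    (hbudget : ∀ᵐ ω ∂μ, 1 - α ≤ Q a (m+1) ω)
    (hvalid : ∀ t ≤ m, ∀ᵐ ω ∂μ, ω ∈ N t ∩ D R t →
        (μ[(R t).indicator (fun _ => (1 : ℝ)) | F G R t]) ω ≤ a t ω + δ t ω) :
    ∑ t ∈ Finset.range (m+1), (μ ((R t ∩ D R t) ∩ N t)).toReal
      ≤ α + ∑ t ∈ Finset.range (m+1),
          ∫ ω, (N t ∩ D R t).indicator (u α a (t+1)) ω * δ t ω ∂μ := by
  have hδbd : ∀ t ≤ m, ∀ ω, |δ t ω| ≤ 1 := by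
    intro t ht ω
    have h1 := ha_mem t ht ω; have h2 := ha_tilde_mem t ht ω
    rw [abs_le]
    constructor
    · nlinarith [h1.2, h2.1]
    · nlinarith [h1.1, h2.2]
  have hind01 : ∀ (S : Set Ω) (ω : Ω),
      0 ≤ S.indicator (fun _ => (1:ℝ)) ω ∧ S.indicator (fun _ => (1:ℝ)) ω ≤ 1 := by
    intro S ω; by_cases h : ω ∈ S <;> simp [h]
  have key : ∀ k t, t + k = m + 1 →
      ∑ s ∈ Finset.Ico t (m+1), (μ ((R s ∩ D R s) ∩ N s)).toReal
        ≤ (∫ ω, (D R t).indicator (fun ω' => 1 - u α a t ω') ω ∂μ)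
          + ∑ s ∈ Finset.Ico t (m+1),
              ∫ ω, (N s ∩ D R s).indicator (u α a (s+1)) ω * δ s ω ∂μ := by
    intro k
    induction k with
    | zero =>
      intro t ht
      have ht' : t = m + 1 := by omega
      subst ht'
      simp only [Finset.Ico_self, Finset.sum_empty, add_zero]
      refine integral_nonneg fun ω => ?_
      refine Set.indicator_nonneg (fun ω' _ => ?_) ω
      have := (u_mem α a (m+1) ω').2; linarith
    | succ k ih =>
      intro t htk
      have ht : t ≤ m := by omega
      have htm : t < m + 1 := by omega
      have hFle : F G R t ≤ m0 := F_le hG_le hR_meas ht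
      set f : Ω → ℝ := (R t).indicator (fun _ => (1:ℝ)) with hf
      set q : Ω → ℝ := μ[f | F G R t] with hq
      set u' : Ω → ℝ := u α a (t+1) with hu'
      set Ct : Set Ω := N t ∩ D R t with hCt
      set g : Ω → ℝ := fun ω =>
        Ct.indicator (fun _ => (1:ℝ)) ω
          - (D R t).indicator (fun _ => (1:ℝ)) ω * (1 - u' ω) with hg
      -- measurability over m0
      have hRm : MeasurableSet (R t) := hR_meas t ht
      have hNm : MeasurableSet (N t) := hG_le t _ (hN_meas t ht)
      have hDm : MeasurableSet (D R t) := D_meas hR_meas (by omega)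
      have hDm' : MeasurableSet (D R (t+1)) := D_meas hR_meas (by omega)
      have hCm : MeasurableSet Ct := hNm.inter hDm
      have hu'm : Measurable u' := u_meas hG_le ha_meas (by omega)
      have hum : Measurable (u α a t) := u_meas hG_le ha_meas (by omega)
      have hδm : Measurable (δ t) := (hδ_meas t ht).mono (hG_le t) le_rfl
      have hfm : Measurable f := measurable_const.indicator hRm
      have hfbd : ∀ ω, 0 ≤ f ω ∧ f ω ≤ 1 := fun ω => hind01 (R t) ω
      have hu2bd : ∀ ω, 0 ≤ u' ω ∧ u' ω ≤ 1 :=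
        fun ω => ⟨(u_mem α a (t+1) ω).1, (u_mem α a (t+1) ω).2⟩
      have hDbd : ∀ ω, 0 ≤ (D R t).indicator (fun _ => (1:ℝ)) ω ∧
          (D R t).indicator (fun _ => (1:ℝ)) ω ≤ 1 := fun ω => hind01 (D R t) ω
      have hCbd : ∀ ω, 0 ≤ Ct.indicator (fun _ => (1:ℝ)) ω ∧
          Ct.indicator (fun _ => (1:ℝ)) ω ≤ 1 := fun ω => hind01 Ct ω
      have hgm : Measurable g :=
        (measurable_const.indicator hCm).sub
          ((measurable_const.indicator hDm).mul (measurable_const.sub hu'm))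
      -- F t measurability
      have hGle' : G t ≤ F G R t := le_sup_left
      have hDF : MeasurableSet[F G R t] (D R t) := D_measF
      have hNF : MeasurableSet[F G R t] (N t) := hGle' _ (hN_meas t ht)
      have hCF : MeasurableSet[F G R t] Ct := hNF.inter hDF
      have hu'F : Measurable[F G R t] u' :=
        (u_meas_GT hG_mono ha_meas ht).mono hGle' le_rfl
      have hgF : StronglyMeasurable[F G R t] g := by
        apply Measurable.stronglyMeasurable
        exact ((@measurable_const ℝ Ω _ (F G R t) 1).indicator hCF).sub
          (((@measurable_const ℝ Ω _ (F G R t) 1).indicator hDF).mul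
            ((@measurable_const ℝ Ω _ (F G R t) 1).sub hu'F))
      -- bounds
      have hu'bd := fun ω => u_mem α a (t+1) ω
      have hgval : ∀ ω, g ω = Ct.indicator (fun _ => (1:ℝ)) ω
          - (D R t).indicator (fun _ => (1:ℝ)) ω * (1 - u' ω) := fun ω => by rw [hg]
      have hgbd : ∀ ω, |g ω| ≤ 2 := by
        intro ω
        have h1 := hCbd ω; have h2 := hDbd ω
        have h3 := hu2bd ω
        rw [hgval ω, abs_le]
        constructor <;> nlinarith [h1.1, h1.2, h2.1, h2.2, h3.1, h3.2]
      -- integrability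
      have int_f : Integrable f μ := by
        refine int_bdd hfm.aestronglyMeasurable 1 fun ω => ?_
        have := hfbd ω; rw [abs_le]; exact ⟨by linarith [this.1], this.2⟩
      have int_gf : Integrable (g * f) μ := by
        refine int_bdd (hgm.mul hfm).aestronglyMeasurable 2 fun ω => ?_
        have h1 := hgbd ω; have h2 := hfbd ω
        simp only [Pi.mul_apply]
        rw [abs_mul]
        calc |g ω| * |f ω| ≤ 2 * 1 := by
              refine mul_le_mul h1 ?_ (abs_nonneg _) (by norm_num)
              rw [abs_le]; exact ⟨by linarith [h2.1], h2.2⟩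
          _ = 2 := by norm_num
      have int_q : Integrable q μ := integrable_condExp
      have int_gq : Integrable (g * q) μ :=
        Integrable.bdd_mul int_q hgm.aestronglyMeasurable
          (c := 2) (ae_of_all _ fun ω => by simpa [Real.norm_eq_abs] using hgbd ω)
      have int_D1u' : Integrable (fun ω => (D R t).indicator (fun _ => (1:ℝ)) ω * (1 - u' ω)) μ := by
        refine int_bdd ((measurable_const.indicator hDm).mul
          (measurable_const.sub hu'm)).aestronglyMeasurable 1 fun ω => ?_
        have h2 := hDbd ω
        have h3 := hu2bd ω
        exact abs_mul2_le h2.1 h2.2 (by linarith [h3.2]) (by linarith [h3.1])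
      have int_D1u'f : Integrable (fun ω =>
          ((D R t).indicator (fun _ => (1:ℝ)) ω * (1 - u' ω)) * f ω) μ := by
        refine int_bdd (((measurable_const.indicator hDm).mul
          (measurable_const.sub hu'm)).mul hfm).aestronglyMeasurable 1 fun ω => ?_
        have h2 := hDbd ω
        have h3 := hu2bd ω
        have h4 := hfbd ω
        have h5 : (0:ℝ) ≤ 1 - u' ω := by linarith [h3.2]
        have h6 : 1 - u' ω ≤ 1 := by linarith [h3.1]
        exact abs_mul3_le h2.1 h2.2 h5 h6 h4.1 h4.2
      have int_Ctf : Integrable (fun ω => Ct.indicator (fun _ => (1:ℝ)) ω * f ω) μ := by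
        refine int_bdd ((measurable_const.indicator hCm).mul hfm).aestronglyMeasurable 1 fun ω => ?_
        have h2 := hCbd ω; have h4 := hfbd ω
        exact abs_mul2_le h2.1 h2.2 h4.1 h4.2
      have int_Dut : Integrable (fun ω => (D R t).indicator (fun ω' => 1 - u α a t ω') ω) μ := by
        refine int_bdd ((measurable_const.sub hum).indicator hDm).aestronglyMeasurable 1 fun ω => ?_
        by_cases hD : ω ∈ D R t
        · rw [Set.indicator_of_mem hD, abs_le]
          have := u_mem α a t ω
          exact ⟨by linarith [this.2], by linarith [this.1]⟩
        · rw [Set.indicator_of_notMem hD]; norm_num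
      have int_err : Integrable (fun ω => Ct.indicator u' ω * δ t ω) μ := by
        refine int_bdd ((hu'm.indicator hCm).mul hδm).aestronglyMeasurable 1 fun ω => ?_
        have h3 := hu2bd ω
        have h5 := hδbd t ht ω
        rw [abs_mul]
        have h6 : |Ct.indicator u' ω| ≤ 1 := by
          by_cases hC : ω ∈ Ct
          · rw [Set.indicator_of_mem hC, abs_le]; exact ⟨by linarith [h3.1], h3.2⟩
          · rw [Set.indicator_of_notMem hC]; norm_num
        calc |Ct.indicator u' ω| * |δ t ω| ≤ 1 * 1 :=
              mul_le_mul h6 h5 (abs_nonneg _) (by norm_num)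
          _ = 1 := by norm_num
      -- q facts
      have hq0 : 0 ≤ᵐ[μ] q := condExp_nonneg (ae_of_all _ fun ω => (hind01 (R t) ω).1)
      have hq1 : q ≤ᵐ[μ] fun _ => (1:ℝ) := by
        have h := condExp_mono (m := F G R t) int_f (integrable_const (1:ℝ))
          (ae_of_all _ fun ω => (hind01 (R t) ω).2)
        rwa [condExp_const hFle] at h
      -- E1
      have E1 : (μ ((R t ∩ D R t) ∩ N t)).toReal
          = ∫ ω, Ct.indicator (fun _ => (1:ℝ)) ω * f ω ∂μ := by
        have hSeq : (R t ∩ D R t) ∩ N t = Ct ∩ R t := by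
          rw [hCt]; ext ω
          simp only [Set.mem_inter_iff]; tauto
        rw [hSeq, ← measureReal_def, ← integral_indicator_one (hCm.inter hRm)]
        refine integral_congr_ae (ae_of_all _ fun ω => ?_)
        have := ind_inter Ct (R t) ω
        exact this
      -- E2
      have E2 : ∫ ω, g ω * f ω ∂μ = ∫ ω, g ω * q ω ∂μ := by
        have hpull : μ[g * f| F G R t] =ᵐ[μ] g * q :=
          condExp_mul_of_stronglyMeasurable_left hgF int_gf int_f
        calc ∫ ω, g ω * f ω ∂μ = ∫ ω, (g * f) ω ∂μ := rfl
          _ = ∫ ω, (μ[g * f| F G R t]) ω ∂μ := (integral_condExp hFle).symm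
          _ = ∫ ω, (g * q) ω ∂μ := integral_congr_ae hpull
          _ = _ := rfl
      -- E3 pointwise
      have E3 : ∀ ω, (D R (t+1)).indicator (fun ω' => 1 - u' ω') ω
          = (D R t).indicator (fun _ => (1:ℝ)) ω * (1 - u' ω)
            - ((D R t).indicator (fun _ => (1:ℝ)) ω * (1 - u' ω)) * f ω := by
        intro ω
        rw [D_succ]
        by_cases hD : ω ∈ D R t <;> by_cases hR : ω ∈ R t <;>
          simp [Set.indicator_of_mem, Set.indicator_of_notMem, hD, hR,
            Set.mem_inter_iff, hf]
      have E4 : ∫ ω, (D R (t+1)).indicator (fun ω' => 1 - u' ω') ω ∂μ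
          = ∫ ω, (D R t).indicator (fun _ => (1:ℝ)) ω * (1 - u' ω) ∂μ
            - ∫ ω, ((D R t).indicator (fun _ => (1:ℝ)) ω * (1 - u' ω)) * f ω ∂μ := by
        rw [← integral_sub int_D1u' int_D1u'f]
        exact integral_congr_ae (ae_of_all _ E3)
      have E5 : ∫ ω, Ct.indicator (fun _ => (1:ℝ)) ω * f ω ∂μ
            - ∫ ω, ((D R t).indicator (fun _ => (1:ℝ)) ω * (1 - u' ω)) * f ω ∂μ
          = ∫ ω, g ω * f ω ∂μ := by
        rw [← integral_sub int_Ctf int_D1u'f]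
        refine integral_congr_ae (ae_of_all _ fun ω => ?_)
        rw [hg]; ring
      -- key pointwise inequality
      have key_ae : ∀ᵐ ω ∂μ, g ω * q ω + (D R t).indicator (fun _ => (1:ℝ)) ω * (1 - u' ω)
          ≤ (D R t).indicator (fun ω' => 1 - u α a t ω') ω + Ct.indicator u' ω * δ t ω := by
        filter_upwards [hq0, hq1, hvalid t ht, hbudget] with ω h0 h1 hv hbw
        rw [← hf, ← hq] at hv
        have hrel : u α a t ω = (1 - a t ω) * u' ω :=
          u_rel (fun s hs => ha_mem s hs ω) hbw ht
        have ha1 := ha_mem t ht ω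
        have ha2 := ha_tilde_mem t ht ω
        have hub1 : (0:ℝ) ≤ u' ω := (u_mem α a (t+1) ω).1
        have hub2 : u' ω ≤ 1 := (u_mem α a (t+1) ω).2
        have h1' : q ω ≤ 1 := h1
        have h0' : 0 ≤ q ω := h0
        by_cases hD : ω ∈ D R t
        · by_cases hN : ω ∈ N t
          · have hC : ω ∈ Ct := ⟨hN, hD⟩
            have hqv : q ω ≤ a t ω + δ t ω := hv hC
            rw [hgval ω]
            simp only [Set.indicator_of_mem hC, Set.indicator_of_mem hD]
            rw [hrel]
            nlinarith [mul_le_mul_of_nonneg_left hqv hub1]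
          · have hC : ω ∉ Ct := fun h => hN h.1
            rw [hg]
            simp only [Set.indicator_of_mem hD, Set.indicator_of_notMem hC]
            have hut : u α a t ω ≤ u' ω := by rw [hrel]; nlinarith [ha1.1, ha1.2]
            nlinarith
        · have hC : ω ∉ Ct := fun h => hD h.2
          rw [hgval ω]
          simp only [Set.indicator_of_notMem hC, Set.indicator_of_notMem hD]
          norm_num
      -- combine
      have int_gq' : Integrable (fun ω => g ω * q ω) μ := int_gq
      have mono_step : ∫ ω, (g ω * q ω + (D R t).indicator (fun _ => (1:ℝ)) ω * (1 - u' ω)) ∂μ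
          ≤ ∫ ω, ((D R t).indicator (fun ω' => 1 - u α a t ω') ω + Ct.indicator u' ω * δ t ω) ∂μ := by
        refine integral_mono_ae (int_gq.add int_D1u') (int_Dut.add int_err) key_ae
      have hsum_split := Finset.sum_eq_sum_Ico_succ_bot htm
        (fun s => (μ ((R s ∩ D R s) ∩ N s)).toReal)
      have hsum_split2 := Finset.sum_eq_sum_Ico_succ_bot htm
        (fun s => ∫ ω, (N s ∩ D R s).indicator (u α a (s+1)) ω * δ s ω ∂μ)
      have ihs := ih (t+1) (by omega)
      calc ∑ s ∈ Finset.Ico t (m+1), (μ ((R s ∩ D R s) ∩ N s)).toReal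
          = (μ ((R t ∩ D R t) ∩ N t)).toReal
            + ∑ s ∈ Finset.Ico (t+1) (m+1), (μ ((R s ∩ D R s) ∩ N s)).toReal := hsum_split
        _ ≤ (μ ((R t ∩ D R t) ∩ N t)).toReal
            + ((∫ ω, (D R (t+1)).indicator (fun ω' => 1 - u α a (t+1) ω') ω ∂μ)
              + ∑ s ∈ Finset.Ico (t+1) (m+1),
                  ∫ ω, (N s ∩ D R s).indicator (u α a (s+1)) ω * δ s ω ∂μ) := by
            linarith [ihs]
        _ = ((∫ ω, Ct.indicator (fun _ => (1:ℝ)) ω * f ω ∂μ)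
              + ∫ ω, (D R (t+1)).indicator (fun ω' => 1 - u' ω') ω ∂μ)
              + ∑ s ∈ Finset.Ico (t+1) (m+1),
                  ∫ ω, (N s ∩ D R s).indicator (u α a (s+1)) ω * δ s ω ∂μ := by
            rw [E1, hu']; ring
        _ = ((∫ ω, g ω * q ω ∂μ)
              + ∫ ω, (D R t).indicator (fun _ => (1:ℝ)) ω * (1 - u' ω) ∂μ)
              + ∑ s ∈ Finset.Ico (t+1) (m+1),
                  ∫ ω, (N s ∩ D R s).indicator (u α a (s+1)) ω * δ s ω ∂μ := by
            rw [E4, ← E2, ← E5]; ring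
        _ = (∫ ω, (g ω * q ω + (D R t).indicator (fun _ => (1:ℝ)) ω * (1 - u' ω)) ∂μ)
              + ∑ s ∈ Finset.Ico (t+1) (m+1),
                  ∫ ω, (N s ∩ D R s).indicator (u α a (s+1)) ω * δ s ω ∂μ := by
            rw [integral_add int_gq' int_D1u']
        _ ≤ (∫ ω, ((D R t).indicator (fun ω' => 1 - u α a t ω') ω + Ct.indicator u' ω * δ t ω) ∂μ)
              + ∑ s ∈ Finset.Ico (t+1) (m+1),
                  ∫ ω, (N s ∩ D R s).indicator (u α a (s+1)) ω * δ s ω ∂μ := by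
            linarith [mono_step]
        _ = (∫ ω, (D R t).indicator (fun ω' => 1 - u α a t ω') ω ∂μ)
              + ((∫ ω, Ct.indicator u' ω * δ t ω ∂μ)
              + ∑ s ∈ Finset.Ico (t+1) (m+1),
                  ∫ ω, (N s ∩ D R s).indicator (u α a (s+1)) ω * δ s ω ∂μ) := by
            rw [integral_add int_Dut int_err]; ring
        _ = (∫ ω, (D R t).indicator (fun ω' => 1 - u α a t ω') ω ∂μ)
              + ∑ s ∈ Finset.Ico t (m+1),
                  ∫ ω, (N s ∩ D R s).indicator (u α a (s+1)) ω * δ s ω ∂μ := by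
            rw [hsum_split2, hCt, hu']
  -- conclude
  have h0 := key (m+1) 0 (by omega)
  rw [Finset.range_eq_Ico]
  have hD0 : ∀ ω, (D R 0).indicator (fun ω' => 1 - u α a 0 ω') ω = 1 - u α a 0 ω := by
    intro ω; rw [D_zero]; exact Set.indicator_of_mem (Set.mem_univ ω) _
  have hu0 : ∀ ω : Ω, u α a 0 ω = max 0 (min 1 (1 - α)) := by
    intro ω; unfold u Q; simp
  have hconst : (∫ ω, (D R 0).indicator (fun ω' => 1 - u α a 0 ω') ω ∂μ)
      = 1 - max 0 (min 1 (1 - α)) := by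
    have : (fun ω => (D R 0).indicator (fun ω' => 1 - u α a 0 ω') ω)
        = fun _ => 1 - max 0 (min 1 (1 - α)) := by
      funext ω; rw [hD0 ω, hu0 ω]
    rw [this, integral_const]
    simp
  have hfinal : 1 - max 0 (min 1 (1 - α)) ≤ α := by
    by_cases h1 : (1:ℝ) - α ≤ 0
    · rw [max_eq_left (le_trans (min_le_right _ _) h1)]; linarith
    · push_neg at h1
      rw [min_eq_right (by linarith), max_eq_right (by linarith)]
      linarith
  calc ∑ t ∈ Finset.Ico 0 (m+1), (μ ((R t ∩ D R t) ∩ N t)).toReal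
      ≤ (∫ ω, (D R 0).indicator (fun ω' => 1 - u α a 0 ω') ω ∂μ)
        + ∑ t ∈ Finset.Ico 0 (m+1),
            ∫ ω, (N t ∩ D R t).indicator (u α a (t+1)) ω * δ t ω ∂μ := h0
    _ ≤ α + ∑ t ∈ Finset.Ico 0 (m+1),
            ∫ ω, (N t ∩ D R t).indicator (u α a (t+1)) ω * δ t ω ∂μ := by
          rw [hconst]; linarith [hfinal]


section lowsec
variable [m0 : MeasurableSpace Ω]

set_option maxHeartbeats 1000000 in
lemma lower (μ : Measure Ω) [IsProbabilityMeasure μ]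
    (m : ℕ) (G : ℕ → MeasurableSpace Ω)
    (hG_mono : ∀ s t : ℕ, s ≤ t → G s ≤ G t) (hG_le : ∀ t, G t ≤ m0)
    (N R : ℕ → Set Ω) (a δ : ℕ → Ω → ℝ) (α : ℝ)
    (hN_meas : ∀ t ≤ m, MeasurableSet[G t] (N t))
    (hR_meas : ∀ t ≤ m, MeasurableSet (R t))
    (ha_meas : ∀ t ≤ m, Measurable[G t] (a t))
    (hδ_meas : ∀ t ≤ m, Measurable[G t] (δ t))
    (ha_mem : ∀ t ≤ m, ∀ ω, a t ω ∈ Set.Icc (0 : ℝ) 1)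
    (ha_tilde_mem : ∀ t ≤ m, ∀ ω, a t ω + δ t ω ∈ Set.Icc (0 : ℝ) 1)
    (hbeq : ∀ᵐ ω ∂μ, Q a (m+1) ω = 1 - α)
    (hexact : ∀ t ≤ m, ∀ᵐ ω ∂μ, ω ∈ N t ∩ D R t →
        (μ[(R t).indicator (fun _ => (1 : ℝ)) | F G R t]) ω = a t ω + δ t ω)
    (hnull : ∀ t ≤ m, ∀ᵐ ω ∂μ, ω ∈ N t) :
    (μ (D R (m+1))).toReal
      ≤ (1 - α) + ∑ t ∈ Finset.range (m+1),
          ∫ ω, (D R t).indicator (fun ω' => max 0 (-(δ t ω'))) ω ∂μ := by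
  have hδbd : ∀ t ≤ m, ∀ ω, |δ t ω| ≤ 1 := by
    intro t ht ω
    have h1 := ha_mem t ht ω; have h2 := ha_tilde_mem t ht ω
    rw [abs_le]
    constructor
    · nlinarith [h1.2, h2.1]
    · nlinarith [h1.1, h2.2]
  have key : ∀ k t, t + k = m + 1 →
      (μ (D R (m+1))).toReal
        ≤ (∫ ω, (D R t).indicator (w α a t) ω ∂μ)
          + ∑ s ∈ Finset.Ico t (m+1),
              ∫ ω, (D R s).indicator (fun ω' => max 0 (-(δ s ω'))) ω ∂μ := by
    intro k
    induction k with
    | zero =>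
      intro t htk
      have ht' : t = m + 1 := by omega
      subst ht'
      simp only [Finset.Ico_self, Finset.sum_empty, add_zero]
      have hDm : MeasurableSet (D R (m+1)) := D_meas hR_meas le_rfl
      have heq : ∫ ω, (D R (m+1)).indicator (w α a (m+1)) ω ∂μ
          = ∫ ω, (D R (m+1)).indicator (fun _ => (1:ℝ)) ω ∂μ := by
        refine integral_congr_ae ?_
        filter_upwards [hbeq] with ω hb
        by_cases hD : ω ∈ D R (m+1)
        · rw [Set.indicator_of_mem hD, Set.indicator_of_mem hD, w_top hb]
        · rw [Set.indicator_of_notMem hD, Set.indicator_of_notMem hD]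
      rw [heq]
      have := integral_indicator_one (μ := μ) hDm
      rw [show ((D R (m+1)).indicator 1 : Ω → ℝ) = (D R (m+1)).indicator (fun _ => (1:ℝ)) from rfl] at this
      rw [this]; exact le_rfl
    | succ k ih =>
      intro t htk
      have ht : t ≤ m := by omega
      have htm : t < m + 1 := by omega
      have hFle : F G R t ≤ m0 := F_le hG_le hR_meas ht
      set f : Ω → ℝ := (R t).indicator (fun _ => (1:ℝ)) with hf
      set q : Ω → ℝ := μ[f | F G R t] with hq
      set w' : Ω → ℝ := w α a (t+1) with hw'
      set h : Ω → ℝ := fun ω => (D R t).indicator w' ω with hh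
      have hhval : ∀ ω, h ω = (D R t).indicator w' ω := fun ω => by rw [hh]
      -- measurability
      have hRm : MeasurableSet (R t) := hR_meas t ht
      have hDm : MeasurableSet (D R t) := D_meas hR_meas (by omega)
      have hDm' : MeasurableSet (D R (t+1)) := D_meas hR_meas (by omega)
      have hw'm : Measurable w' := w_meas hG_le ha_meas (by omega)
      have hwtm : Measurable (w α a t) := w_meas hG_le ha_meas (by omega)
      have hδm : Measurable (δ t) := (hδ_meas t ht).mono (hG_le t) le_rfl
      have hfm : Measurable f := measurable_const.indicator hRm
      have hhm : Measurable h := hw'm.indicator hDm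
      have hGle' : G t ≤ F G R t := le_sup_left
      have hhF : StronglyMeasurable[F G R t] h := by
        apply Measurable.stronglyMeasurable
        exact Measurable.indicator ((w_meas_GT hG_mono ha_meas ht).mono hGle' le_rfl) D_measF
      -- bounds
      have hw'bd : ∀ ω, 0 ≤ w' ω ∧ w' ω ≤ 1 :=
        fun ω => ⟨(w_mem α a (t+1) ω).1, (w_mem α a (t+1) ω).2⟩
      have hfbd : ∀ ω, 0 ≤ f ω ∧ f ω ≤ 1 := by
        intro ω; by_cases hR : ω ∈ R t <;>
          simp [hf, Set.indicator_of_mem, Set.indicator_of_notMem, hR]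
      have hhbd : ∀ ω, 0 ≤ h ω ∧ h ω ≤ 1 := by
        intro ω
        rw [hhval ω]
        by_cases hD : ω ∈ D R t
        · rw [Set.indicator_of_mem hD]; exact hw'bd ω
        · rw [Set.indicator_of_notMem hD]; norm_num
      -- integrability
      have int_f : Integrable f μ := by
        refine int_bdd hfm.aestronglyMeasurable 1 fun ω => ?_
        have := hfbd ω; rw [abs_le]; exact ⟨by linarith [this.1], this.2⟩
      have int_h : Integrable h μ := by
        refine int_bdd hhm.aestronglyMeasurable 1 fun ω => ?_
        have := hhbd ω; rw [abs_le]; exact ⟨by linarith [this.1], this.2⟩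
      have int_hf : Integrable (h * f) μ := by
        refine int_bdd (hhm.mul hfm).aestronglyMeasurable 1 fun ω => ?_
        have h1 := hhbd ω; have h2 := hfbd ω
        simp only [Pi.mul_apply]
        rw [abs_of_nonneg (mul_nonneg h1.1 h2.1)]
        calc h ω * f ω ≤ 1 * 1 := mul_le_mul h1.2 h2.2 h2.1 (by norm_num)
          _ = 1 := by norm_num
      have int_q : Integrable q μ := integrable_condExp
      have int_hq : Integrable (h * q) μ :=
        Integrable.bdd_mul int_q hhm.aestronglyMeasurable
          (c := 1) (ae_of_all _ fun ω => by
            have := hhbd ω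
            rw [Real.norm_eq_abs, abs_le]
            exact ⟨by linarith [this.1], this.2⟩)
      have int_ha : Integrable (fun ω => h ω * (a t ω + δ t ω)) μ := by
        have ham : Measurable (a t) := (ha_meas t ht).mono (hG_le t) le_rfl
        refine int_bdd (hhm.mul (ham.add hδm)).aestronglyMeasurable 1 fun ω => ?_
        have h1 := hhbd ω; have h2 := ha_tilde_mem t ht ω
        rw [abs_of_nonneg (mul_nonneg h1.1 h2.1)]
        calc h ω * (a t ω + δ t ω) ≤ 1 * 1 := mul_le_mul h1.2 h2.2 h2.1 (by norm_num)
          _ = 1 := by norm_num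
      have int_hha : Integrable (fun ω => h ω - h ω * (a t ω + δ t ω)) μ :=
        int_h.sub int_ha
      have int_wt : Integrable (fun ω => (D R t).indicator (w α a t) ω) μ := by
        refine int_bdd (hwtm.indicator hDm).aestronglyMeasurable 1 fun ω => ?_
        by_cases hD : ω ∈ D R t
        · rw [Set.indicator_of_mem hD, abs_le]
          have := w_mem α a t ω
          exact ⟨by linarith [this.1], this.2⟩
        · rw [Set.indicator_of_notMem hD]; norm_num
      have int_md : Integrable (fun ω => (D R t).indicator (fun ω' => max 0 (-(δ t ω'))) ω) μ := by
        refine int_bdd ((measurable_const.max hδm.neg).indicator hDm).aestronglyMeasurable 1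
          fun ω => ?_
        by_cases hD : ω ∈ D R t
        · rw [Set.indicator_of_mem hD, abs_le]
          have := hδbd t ht ω
          rw [abs_le] at this
          constructor
          · have : (0:ℝ) ≤ max 0 (-(δ t ω)) := le_max_left _ _
            linarith
          · exact max_le (by norm_num) (by linarith [this.1])
        · rw [Set.indicator_of_notMem hD]; norm_num
      -- pointwise identity for D_{t+1}
      have E3 : ∀ ω, (D R (t+1)).indicator w' ω = h ω - h ω * f ω := by
        intro ω
        rw [hhval ω, D_succ]
        by_cases hD : ω ∈ D R t <;> by_cases hR : ω ∈ R t <;>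
          simp [Set.indicator_of_mem, Set.indicator_of_notMem, hD, hR,
            Set.mem_inter_iff, hf]
      have E4 : ∫ ω, (D R (t+1)).indicator w' ω ∂μ
          = ∫ ω, h ω ∂μ - ∫ ω, h ω * f ω ∂μ := by
        have int_hf' : Integrable (fun ω => h ω * f ω) μ := int_hf
        rw [← integral_sub int_h int_hf']
        exact integral_congr_ae (ae_of_all _ E3)
      -- pull-out
      have E2 : ∫ ω, h ω * f ω ∂μ = ∫ ω, h ω * q ω ∂μ := by
        have hpull : μ[h * f| F G R t] =ᵐ[μ] h * q :=
          condExp_mul_of_stronglyMeasurable_left hhF int_hf int_f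
        calc ∫ ω, h ω * f ω ∂μ = ∫ ω, (h * f) ω ∂μ := rfl
          _ = ∫ ω, (μ[h * f| F G R t]) ω ∂μ := (integral_condExp hFle).symm
          _ = ∫ ω, (h * q) ω ∂μ := integral_congr_ae hpull
          _ = _ := rfl
      -- exactness
      have Eex : ∫ ω, h ω * q ω ∂μ = ∫ ω, h ω * (a t ω + δ t ω) ∂μ := by
        refine integral_congr_ae ?_
        filter_upwards [hexact t ht, hnull t ht] with ω hex hn
        rw [← hf, ← hq] at hex
        by_cases hD : ω ∈ D R t
        · rw [hex ⟨hn, hD⟩]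
        · rw [hhval ω, Set.indicator_of_notMem hD, zero_mul, zero_mul]
      -- key pointwise inequality
      have key_ae : ∀ᵐ ω ∂μ, h ω - h ω * (a t ω + δ t ω)
          ≤ (D R t).indicator (w α a t) ω
            + (D R t).indicator (fun ω' => max 0 (-(δ t ω'))) ω := by
        filter_upwards [hbeq] with ω hb
        by_cases hD : ω ∈ D R t
        · rw [hhval ω, Set.indicator_of_mem hD, Set.indicator_of_mem hD,
            Set.indicator_of_mem hD]
          have := w_step ht (fun s hs => ha_mem s hs ω) (ha_tilde_mem t ht ω) hb
          rw [hw']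
          nlinarith [this]
        · rw [hhval ω, Set.indicator_of_notMem hD, Set.indicator_of_notMem hD,
            Set.indicator_of_notMem hD]
          norm_num
      have mono_step : ∫ ω, (h ω - h ω * (a t ω + δ t ω)) ∂μ
          ≤ ∫ ω, ((D R t).indicator (w α a t) ω
              + (D R t).indicator (fun ω' => max 0 (-(δ t ω'))) ω) ∂μ :=
        integral_mono_ae int_hha (int_wt.add int_md) key_ae
      have int_hq' : Integrable (fun ω => h ω * q ω) μ := int_hq
      have hsum_split := Finset.sum_eq_sum_Ico_succ_bot htm
        (fun s => ∫ ω, (D R s).indicator (fun ω' => max 0 (-(δ s ω'))) ω ∂μ)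
      have ihs := ih (t+1) (by omega)
      calc (μ (D R (m+1))).toReal
          ≤ (∫ ω, (D R (t+1)).indicator (w α a (t+1)) ω ∂μ)
            + ∑ s ∈ Finset.Ico (t+1) (m+1),
                ∫ ω, (D R s).indicator (fun ω' => max 0 (-(δ s ω'))) ω ∂μ := ihs
        _ = ((∫ ω, h ω ∂μ) - ∫ ω, h ω * (a t ω + δ t ω) ∂μ)
            + ∑ s ∈ Finset.Ico (t+1) (m+1),
                ∫ ω, (D R s).indicator (fun ω' => max 0 (-(δ s ω'))) ω ∂μ := by
            rw [← hw', E4, E2, Eex]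
        _ = (∫ ω, (h ω - h ω * (a t ω + δ t ω)) ∂μ)
            + ∑ s ∈ Finset.Ico (t+1) (m+1),
                ∫ ω, (D R s).indicator (fun ω' => max 0 (-(δ s ω'))) ω ∂μ := by
            rw [integral_sub int_h int_ha]
        _ ≤ (∫ ω, ((D R t).indicator (w α a t) ω
              + (D R t).indicator (fun ω' => max 0 (-(δ t ω'))) ω) ∂μ)
            + ∑ s ∈ Finset.Ico (t+1) (m+1),
                ∫ ω, (D R s).indicator (fun ω' => max 0 (-(δ s ω'))) ω ∂μ := by
            linarith [mono_step]
        _ = (∫ ω, (D R t).indicator (w α a t) ω ∂μ)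
            + ((∫ ω, (D R t).indicator (fun ω' => max 0 (-(δ t ω'))) ω ∂μ)
            + ∑ s ∈ Finset.Ico (t+1) (m+1),
                ∫ ω, (D R s).indicator (fun ω' => max 0 (-(δ s ω'))) ω ∂μ) := by
            rw [integral_add int_wt int_md]; ring
        _ = (∫ ω, (D R t).indicator (w α a t) ω ∂μ)
            + ∑ s ∈ Finset.Ico t (m+1),
                ∫ ω, (D R s).indicator (fun ω' => max 0 (-(δ s ω'))) ω ∂μ := by
            rw [hsum_split]
  have h0 := key (m+1) 0 (by omega)
  have hw0 : ∫ ω, (D R 0).indicator (w α a 0) ω ∂μ = 1 - α := by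
    have heq : ∫ ω, (D R 0).indicator (w α a 0) ω ∂μ = ∫ _ω, (1 - α) ∂μ := by
      refine integral_congr_ae ?_
      filter_upwards [hbeq] with ω hb
      rw [D_zero, Set.indicator_of_mem (Set.mem_univ ω),
        w_zero (fun s hs => ha_mem s hs ω) hb]
    rw [heq, integral_const]
    simp
  rw [Finset.range_eq_Ico]
  calc (μ (D R (m+1))).toReal
      ≤ (∫ ω, (D R 0).indicator (w α a 0) ω ∂μ)
        + ∑ s ∈ Finset.Ico 0 (m+1),
            ∫ ω, (D R s).indicator (fun ω' => max 0 (-(δ s ω'))) ω ∂μ := h0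
    _ = (1 - α) + ∑ s ∈ Finset.Ico 0 (m+1),
            ∫ ω, (D R s).indicator (fun ω' => max 0 (-(δ s ω'))) ω ∂μ := by rw [hw0]


end lowsec

end ApproxSEC

open ApproxSEC in
set_option maxHeartbeats 1000000 in
/-- **Approximate sequential error control.** For a conditionally valid testing sequence
with achieved levels `α̃_t = α_t + δ_t` (targets `α_t ∈ [0,1]`, approximation errors `δ_t`,
both `G_t`-measurable) whose targets form a valid `α`-budget, there is a random variable
`ε₀ = ∑_t c_t δ_t` with random coefficients `c_t ∈ [0,1]` (so `|ε₀| ≤ ∑_t |δ_t|`) such that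
`P(H_τ = 0) ≤ α + E[ε₀]`; consequently `P(H_τ = 0) ≤ α + E[∑_t |δ_t|]`.  Under conditional
exactness, an exact budget, and the global null, `P(H_τ = 0) = α + E[ε₀]`.
Here `N t = {H_t = 0}` and `R t = {φ_t = 1}`. -/
theorem approximate_sequential_error_control
    {Ω : Type*} [m0 : MeasurableSpace Ω] (μ : Measure Ω) [IsProbabilityMeasure μ]
    (m : ℕ) (G : ℕ → MeasurableSpace Ω)
    (hG_mono : ∀ s t : ℕ, s ≤ t → G s ≤ G t) (hG_le : ∀ t, G t ≤ m0)
    (N R : ℕ → Set Ω) (a δ : ℕ → Ω → ℝ) (α : ℝ)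
    (hN_meas : ∀ t ≤ m, MeasurableSet[G t] (N t))
    (hR_meas : ∀ t ≤ m, MeasurableSet (R t))
    (ha_meas : ∀ t ≤ m, Measurable[G t] (a t))
    (hδ_meas : ∀ t ≤ m, Measurable[G t] (δ t))
    (ha_mem : ∀ t ≤ m, ∀ ω, a t ω ∈ Set.Icc (0 : ℝ) 1)
    (ha_tilde_mem : ∀ t ≤ m, ∀ ω, a t ω + δ t ω ∈ Set.Icc (0 : ℝ) 1)
    (hbudget : ∀ᵐ ω ∂μ, 1 - ∏ t ∈ Finset.range (m + 1), (1 - a t ω) ≤ α)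
    (hvalid : ∀ t ≤ m, ∀ᵐ ω ∂μ,
      ω ∈ N t ∩ ⋂ s ∈ Finset.range t, (R s)ᶜ →
        (μ[(R t).indicator (fun _ => (1 : ℝ)) |
            (G t ⊔ ⨆ s ∈ Finset.range t, MeasurableSpace.generateFrom {R s})]) ω
          ≤ a t ω + δ t ω) :
    (∃ c : ℕ → Ω → ℝ,
      (∀ t ω, c t ω ∈ Set.Icc (0 : ℝ) 1) ∧
      (∀ ω, |∑ t ∈ Finset.range (m + 1), c t ω * δ t ω|
          ≤ ∑ t ∈ Finset.range (m + 1), |δ t ω|) ∧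
      ((μ (⋃ t ∈ Finset.range (m + 1),
            ((R t ∩ ⋂ s ∈ Finset.range t, (R s)ᶜ) ∩ N t))).toReal
        ≤ α + ∫ ω, (∑ t ∈ Finset.range (m + 1), c t ω * δ t ω) ∂μ) ∧
      ((∀ t ≤ m, ∀ᵐ ω ∂μ,
          ω ∈ N t ∩ ⋂ s ∈ Finset.range t, (R s)ᶜ →
            (μ[(R t).indicator (fun _ => (1 : ℝ)) |
                (G t ⊔ ⨆ s ∈ Finset.range t, MeasurableSpace.generateFrom {R s})]) ω
              = a t ω + δ t ω) →
        (∀ᵐ ω ∂μ, 1 - ∏ t ∈ Finset.range (m + 1), (1 - a t ω) = α) →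
        (∀ t ≤ m, ∀ᵐ ω ∂μ, ω ∈ N t) →
        (μ (⋃ t ∈ Finset.range (m + 1),
            ((R t ∩ ⋂ s ∈ Finset.range t, (R s)ᶜ) ∩ N t))).toReal
          = α + ∫ ω, (∑ t ∈ Finset.range (m + 1), c t ω * δ t ω) ∂μ)) ∧
    ((μ (⋃ t ∈ Finset.range (m + 1),
          ((R t ∩ ⋂ s ∈ Finset.range t, (R s)ᶜ) ∩ N t))).toReal
      ≤ α + ∫ ω, (∑ t ∈ Finset.range (m + 1), |δ t ω|) ∂μ) := by

  classical
  have hDdef : ∀ t : ℕ, (⋂ s ∈ Finset.range t, (R s)ᶜ) = D R t := fun _ => rfl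
  have hFdef : ∀ t : ℕ,
      (G t ⊔ ⨆ s ∈ Finset.range t, MeasurableSpace.generateFrom {R s}) = F G R t :=
    fun _ => rfl
  have hQdef : ∀ ω, (∏ t ∈ Finset.range (m + 1), (1 - a t ω)) = Q a (m+1) ω := fun _ => rfl
  simp only [hDdef, hFdef, hQdef] at hvalid hbudget ⊢
  have hδm : ∀ t ≤ m, Measurable (δ t) := fun t ht => (hδ_meas t ht).mono (hG_le t) le_rfl
  have hδbd : ∀ t ≤ m, ∀ ω, |δ t ω| ≤ 1 := by
    intro t ht ω
    have h1 := ha_mem t ht ω; have h2 := ha_tilde_mem t ht ω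
    rw [abs_le]
    constructor
    · nlinarith [h1.2, h2.1]
    · nlinarith [h1.1, h2.2]
  have hNm : ∀ t ≤ m, MeasurableSet (N t) := fun t ht => hG_le t _ (hN_meas t ht)
  have _ : (MeasureTheory.ae μ).NeBot := ae_neBot.2 (IsProbabilityMeasure.ne_zero μ)
  have hα0 : 0 ≤ α := by
    obtain ⟨ω, hω⟩ := hbudget.exists
    have h1 : Q a (m+1) ω ≤ 1 := Q_le_one (fun s hs => ha_mem s hs ω) le_rfl
    linarith
  have hbudget' : ∀ᵐ ω ∂μ, 1 - α ≤ Q a (m+1) ω := by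
    filter_upwards [hbudget] with ω h; linarith
  -- coefficients
  set cplus : ℕ → Ω → ℝ := fun t => (N t ∩ D R t).indicator (u α a (t+1)) with hcplus
  set cminus : ℕ → Ω → ℝ :=
    fun t => (D R t ∩ {ω | δ t ω < 0}).indicator (fun _ => (1:ℝ)) with hcminus
  have hcplus_val : ∀ t ω, cplus t ω = (N t ∩ D R t).indicator (u α a (t+1)) ω :=
    fun t ω => by rw [hcplus]
  have hcminus_val : ∀ t ω,
      cminus t ω = (D R t ∩ {ω' | δ t ω' < 0}).indicator (fun _ => (1:ℝ)) ω :=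
    fun t ω => by rw [hcminus]
  have hcplus_mem : ∀ t ω, cplus t ω ∈ Set.Icc (0:ℝ) 1 := by
    intro t ω
    rw [hcplus_val]
    by_cases h : ω ∈ N t ∩ D R t
    · simp only [Set.indicator_of_mem h]
      exact u_mem α a (t+1) ω
    · simp only [Set.indicator_of_notMem h]
      exact ⟨le_refl 0, zero_le_one⟩
  have hcminus_mem : ∀ t ω, cminus t ω ∈ Set.Icc (0:ℝ) 1 := by
    intro t ω
    rw [hcminus_val]
    by_cases h : ω ∈ D R t ∩ {ω' | δ t ω' < 0}
    · simp only [Set.indicator_of_mem h]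
      exact ⟨zero_le_one, le_refl 1⟩
    · simp only [Set.indicator_of_notMem h]
      exact ⟨le_refl 0, zero_le_one⟩
  -- integrability
  have int_c : ∀ (c : ℕ → Ω → ℝ), (∀ t ω, c t ω ∈ Set.Icc (0:ℝ) 1) →
      (∀ t ≤ m, Measurable (c t)) →
      ∀ t ≤ m, Integrable (fun ω => c t ω * δ t ω) μ := by
    intro c hc hcm t ht
    refine int_bdd ((hcm t ht).mul (hδm t ht)).aestronglyMeasurable 1 fun ω => ?_
    rw [abs_mul]
    have h1 := hc t ω
    have h2 := hδbd t ht ω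
    calc |c t ω| * |δ t ω| ≤ 1 * 1 := by
          refine mul_le_mul ?_ h2 (abs_nonneg _) (by norm_num)
          rw [abs_le]; exact ⟨by linarith [h1.1], h1.2⟩
      _ = 1 := by norm_num
  have hcplus_meas : ∀ t ≤ m, Measurable (cplus t) := by
    intro t ht
    rw [hcplus]
    exact (u_meas hG_le ha_meas (by omega)).indicator
      ((hNm t ht).inter (D_meas hR_meas (by omega)))
  have hcminus_meas : ∀ t ≤ m, Measurable (cminus t) := by
    intro t ht
    rw [hcminus]
    exact measurable_const.indicator
      ((D_meas hR_meas (by omega)).inter (measurableSet_lt (hδm t ht) measurable_const))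
  have int_cplusδ := int_c cplus hcplus_mem hcplus_meas
  have int_cminusδ := int_c cminus hcminus_mem hcminus_meas
  have mem_le : ∀ t ∈ Finset.range (m+1), t ≤ m := by
    intro t ht; have := Finset.mem_range.1 ht; omega
  have int_sum_plus : Integrable (fun ω => ∑ t ∈ Finset.range (m+1), cplus t ω * δ t ω) μ :=
    integrable_finset_sum _ fun t ht => int_cplusδ t (mem_le t ht)
  have int_sum_minus : Integrable (fun ω => ∑ t ∈ Finset.range (m+1), cminus t ω * δ t ω) μ :=
    integrable_finset_sum _ fun t ht => int_cminusδ t (mem_le t ht)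
  have int_abs : Integrable (fun ω => ∑ t ∈ Finset.range (m+1), |δ t ω|) μ :=
    integrable_finset_sum _ fun t ht =>
      int_bdd (hδm t (mem_le t ht)).abs.aestronglyMeasurable 1 fun ω => by
        rw [abs_abs]; exact hδbd t (mem_le t ht) ω
  have hswap_plus : ∫ ω, (∑ t ∈ Finset.range (m+1), cplus t ω * δ t ω) ∂μ
      = ∑ t ∈ Finset.range (m+1), ∫ ω, cplus t ω * δ t ω ∂μ :=
    integral_finset_sum _ fun t ht => int_cplusδ t (mem_le t ht)
  have hswap_minus : ∫ ω, (∑ t ∈ Finset.range (m+1), cminus t ω * δ t ω) ∂μ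
      = ∑ t ∈ Finset.range (m+1), ∫ ω, cminus t ω * δ t ω ∂μ :=
    integral_finset_sum _ fun t ht => int_cminusδ t (mem_le t ht)
  -- upper bound
  have hPsum := union_toReal_eq_sum μ hR_meas hNm
  have hup0 := upper μ m G hG_mono hG_le N R a δ α hN_meas hR_meas ha_meas hδ_meas
    ha_mem ha_tilde_mem hα0 hbudget' hvalid
  have hupper : (μ (⋃ t ∈ Finset.range (m+1), ((R t ∩ D R t) ∩ N t))).toReal
      ≤ α + ∫ ω, (∑ t ∈ Finset.range (m+1), cplus t ω * δ t ω) ∂μ := by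
    rw [hPsum, hswap_plus]
    exact hup0
  -- clause 2 generic
  have habs : ∀ (c : ℕ → Ω → ℝ), (∀ t ω, c t ω ∈ Set.Icc (0:ℝ) 1) → ∀ ω,
      |∑ t ∈ Finset.range (m + 1), c t ω * δ t ω|
        ≤ ∑ t ∈ Finset.range (m + 1), |δ t ω| := by
    intro c hc ω
    calc |∑ t ∈ Finset.range (m + 1), c t ω * δ t ω|
        ≤ ∑ t ∈ Finset.range (m + 1), |c t ω * δ t ω| :=
          Finset.abs_sum_le_sum_abs _ _
      _ ≤ ∑ t ∈ Finset.range (m + 1), |δ t ω| := by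
          refine Finset.sum_le_sum fun t ht => ?_
          rw [abs_mul]
          have h1 := hc t ω
          calc |c t ω| * |δ t ω| ≤ 1 * |δ t ω| := by
                refine mul_le_mul_of_nonneg_right ?_ (abs_nonneg _)
                rw [abs_le]; exact ⟨by linarith [h1.1], h1.2⟩
            _ = |δ t ω| := one_mul _
  -- clause 5
  have hle_abs : ∫ ω, (∑ t ∈ Finset.range (m+1), cplus t ω * δ t ω) ∂μ
      ≤ ∫ ω, (∑ t ∈ Finset.range (m+1), |δ t ω|) ∂μ := by
    refine integral_mono int_sum_plus int_abs fun ω => ?_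
    refine Finset.sum_le_sum fun t ht => ?_
    calc cplus t ω * δ t ω ≤ |cplus t ω * δ t ω| := le_abs_self _
      _ ≤ |δ t ω| := by
          rw [abs_mul]
          have h1 := hcplus_mem t ω
          calc |cplus t ω| * |δ t ω| ≤ 1 * |δ t ω| := by
                refine mul_le_mul_of_nonneg_right ?_ (abs_nonneg _)
                rw [abs_le]; exact ⟨by linarith [h1.1], h1.2⟩
            _ = |δ t ω| := one_mul _
  have hclause5 : (μ (⋃ t ∈ Finset.range (m+1), ((R t ∩ D R t) ∩ N t))).toReal
      ≤ α + ∫ ω, (∑ t ∈ Finset.range (m + 1), |δ t ω|) ∂μ := by linarith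
  -- case split on exactness package
  by_cases hE : (∀ t ≤ m, ∀ᵐ ω ∂μ, ω ∈ N t ∩ D R t →
        (μ[(R t).indicator (fun _ => (1 : ℝ)) | F G R t]) ω = a t ω + δ t ω)
      ∧ (∀ᵐ ω ∂μ, 1 - Q a (m+1) ω = α)
      ∧ (∀ t ≤ m, ∀ᵐ ω ∂μ, ω ∈ N t)
  · obtain ⟨hex, hbeqraw, hnull⟩ := hE
    have hbeq : ∀ᵐ ω ∂μ, Q a (m+1) ω = 1 - α := by
      filter_upwards [hbeqraw] with ω h; linarith
    have hlow := lower μ m G hG_mono hG_le N R a δ α hN_meas hR_meas ha_meas hδ_meas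
      ha_mem ha_tilde_mem hbeq hex hnull
    have hPeq := P_eq μ hR_meas hnull
    have hlink : ∀ t ≤ m, ∫ ω, cminus t ω * δ t ω ∂μ
        = - ∫ ω, (D R t).indicator (fun ω' => max 0 (-(δ t ω'))) ω ∂μ := by
      intro t ht
      rw [← integral_neg]
      refine integral_congr_ae (ae_of_all _ fun ω => ?_)
      show cminus t ω * δ t ω = -((D R t).indicator (fun ω' => max 0 (-(δ t ω'))) ω)
      rw [hcminus_val]
      by_cases hD : ω ∈ D R t
      · by_cases hd : δ t ω < 0
        · have hmem : ω ∈ D R t ∩ {ω' | δ t ω' < 0} := ⟨hD, hd⟩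
          rw [Set.indicator_of_mem hmem, Set.indicator_of_mem hD,
            max_eq_right (by linarith : (0:ℝ) ≤ -(δ t ω))]
          ring
        · have hmem : ω ∉ D R t ∩ {ω' | δ t ω' < 0} := fun h => hd h.2
          rw [Set.indicator_of_notMem hmem, Set.indicator_of_mem hD,
            max_eq_left (by push_neg at hd; linarith : -(δ t ω) ≤ (0:ℝ))]
          ring
      · have hmem : ω ∉ D R t ∩ {ω' | δ t ω' < 0} := fun h => hD h.1
        rw [Set.indicator_of_notMem hmem, Set.indicator_of_notMem hD]
        ring
    have hsum_link : ∑ t ∈ Finset.range (m+1), ∫ ω, cminus t ω * δ t ω ∂μ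
        = - ∑ t ∈ Finset.range (m+1),
            ∫ ω, (D R t).indicator (fun ω' => max 0 (-(δ t ω'))) ω ∂μ := by
      rw [← Finset.sum_neg_distrib]
      exact Finset.sum_congr rfl fun t ht => hlink t (mem_le t ht)
    have hlower : α + ∫ ω, (∑ t ∈ Finset.range (m+1), cminus t ω * δ t ω) ∂μ
        ≤ (μ (⋃ t ∈ Finset.range (m+1), ((R t ∩ D R t) ∩ N t))).toReal := by
      rw [hPeq, hswap_minus, hsum_link]
      linarith [hlow]
    -- interpolation
    set P : ℝ := (μ (⋃ t ∈ Finset.range (m+1), ((R t ∩ D R t) ∩ N t))).toReal with hP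
    set Sp : ℝ := ∫ ω, (∑ t ∈ Finset.range (m+1), cplus t ω * δ t ω) ∂μ with hSp
    set Sm : ℝ := ∫ ω, (∑ t ∈ Finset.range (m+1), cminus t ω * δ t ω) ∂μ with hSm
    have hPm : α + Sm ≤ P := hlower
    have hPp : P ≤ α + Sp := hupper
    set l : ℝ := if Sp = Sm then 0 else (P - α - Sm) / (Sp - Sm) with hl
    have hl0 : 0 ≤ l := by
      rw [hl]
      split_ifs with h
      · exact le_refl 0
      · have hlt : 0 < Sp - Sm := by
          rcases lt_or_eq_of_le (by linarith : Sm ≤ Sp) with h' | h'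
          · linarith
          · exact absurd h'.symm h
        exact div_nonneg (by linarith) (le_of_lt hlt)
    have hl1 : l ≤ 1 := by
      rw [hl]
      split_ifs with h
      · exact zero_le_one
      · have hlt : 0 < Sp - Sm := by
          rcases lt_or_eq_of_le (by linarith : Sm ≤ Sp) with h' | h'
          · linarith
          · exact absurd h'.symm h
        rw [div_le_one hlt]
        linarith
    set c : ℕ → Ω → ℝ := fun t ω => cminus t ω + l * (cplus t ω - cminus t ω) with hc
    have hc_val : ∀ t ω, c t ω = cminus t ω + l * (cplus t ω - cminus t ω) :=
      fun t ω => by rw [hc]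
    have hc_mem : ∀ t ω, c t ω ∈ Set.Icc (0:ℝ) 1 := by
      intro t ω
      have h1 := hcplus_mem t ω
      have h2 := hcminus_mem t ω
      rw [hc_val]
      constructor
      · nlinarith [h1.1, h1.2, h2.1, h2.2]
      · nlinarith [h1.1, h1.2, h2.1, h2.2]
    have hptw : (fun ω => ∑ t ∈ Finset.range (m+1), c t ω * δ t ω)
        = fun ω => (1-l) * (∑ t ∈ Finset.range (m+1), cminus t ω * δ t ω)
            + l * (∑ t ∈ Finset.range (m+1), cplus t ω * δ t ω) := by
      funext ω
      rw [Finset.mul_sum, Finset.mul_sum, ← Finset.sum_add_distrib]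
      refine Finset.sum_congr rfl fun t ht => ?_
      rw [hc_val]; ring
    have hintc : ∫ ω, (∑ t ∈ Finset.range (m+1), c t ω * δ t ω) ∂μ = P - α := by
      rw [hptw, integral_add (int_sum_minus.const_mul _) (int_sum_plus.const_mul _),
        integral_const_mul, integral_const_mul, ← hSm, ← hSp]
      rw [hl]
      split_ifs with h
      · have : Sm = P - α := by
          rw [h] at hPp
          linarith
        rw [this]; ring
      · have hne : Sp - Sm ≠ 0 := sub_ne_zero.2 h
        have hcan : (P - α - Sm) / (Sp - Sm) * (Sp - Sm) = P - α - Sm :=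
          div_mul_cancel₀ _ hne
        nlinarith [hcan]
    refine ⟨⟨c, hc_mem, habs c hc_mem, ?_, ?_⟩, hclause5⟩
    · rw [hintc]; linarith
    · intro _ _ _
      rw [hintc]; ring
  · refine ⟨⟨cplus, hcplus_mem, habs cplus hcplus_mem, hupper, ?_⟩, hclause5⟩
    intro h1 h2 h3
    exact absurd ⟨h1, by filter_upwards [h2] with ω hh; linarith, h3⟩ hE
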